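/- arXiv:2107.11136 — 3 statements merged into one kernel-verified Lean document; each statement's English description precedes it below -/
import Mathlib

section
/- The Catoni truncation function φ satisfies -log(1 - u + u²/2) ≤ φ(u) ≤ log(1 + u + u²/2) for all real u. -/
noncomputable def phi (x : ℝ) : ℝ :=
  if x < -Real.sqrt 2 then -(2 * Real.sqrt 2 / 3)
  else if x ≤ Real.sqrt 2 then x - x ^ 3 / 6
  else 2 * Real.sqrt 2 / 3

lemma hD (x : ℝ) : 0 < 1 + x + x ^ 2 / 2 := by nlinarith [sq_nonneg (x + 1)]

lemma hg (x : ℝ) : HasDerivAt (fun x : ℝ => Real.log (1 + x + x ^ 2 / 2) - (x - x ^ 3 / 6))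
    ((1 + x) / (1 + x + x ^ 2 / 2) - (1 - x ^ 2 / 2)) x := by
  have h1 : HasDerivAt (fun x : ℝ => 1 + x + x ^ 2 / 2) (1 + x) x := by
    have h := ((hasDerivAt_pow 2 x).div_const 2)
    have := ((hasDerivAt_const x (1:ℝ)).add (hasDerivAt_id x)).add h
    refine this.congr_deriv ?_; push_cast; ring
  have h2 := h1.log (ne_of_gt (hD x))
  have h3 : HasDerivAt (fun x : ℝ => x - x ^ 3 / 6) (1 - x ^ 2 / 2) x := by
    have h := (hasDerivAt_pow 3 x).div_const 6
    have := (hasDerivAt_id x).sub h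
    refine this.congr_deriv ?_; push_cast; ring
  exact h2.sub h3

lemma key (x : ℝ) (hx1 : -2 ≤ x) (hx2 : x ≤ 2) :
    x - x ^ 3 / 6 ≤ Real.log (1 + x + x ^ 2 / 2) := by
  set g : ℝ → ℝ := fun x : ℝ => Real.log (1 + x + x ^ 2 / 2) - (x - x ^ 3 / 6) with hgdef
  have g0 : g 0 = 0 := by simp [hgdef]
  rcases le_or_gt 0 x with h | h
  · have mono : MonotoneOn g (Set.Ici (0:ℝ)) := by
      apply monotoneOn_of_deriv_nonneg (convex_Ici 0)
      · exact fun x _ => ((hg x).continuousAt).continuousWithinAt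
      · exact fun x _ => ((hg x).differentiableAt).differentiableWithinAt
      · intro y hy
        rw [interior_Ici] at hy
        rw [(hg y).deriv, sub_nonneg, le_div_iff₀ (hD y)]
        nlinarith [(Set.mem_Ioi.mp hy).le, sq_nonneg y]
    have := mono (Set.self_mem_Ici) (Set.mem_Ici.mpr h) h
    rw [g0] at this
    simpa [hgdef] using this
  · have anti : AntitoneOn g (Set.Icc (-2:ℝ) 0) := by
      apply antitoneOn_of_deriv_nonpos (convex_Icc _ _)
      · exact fun x _ => ((hg x).continuousAt).continuousWithinAt
      · exact fun x hx => ((hg x).differentiableAt).differentiableWithinAt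
      · intro y hy
        rw [interior_Icc] at hy
        rw [(hg y).deriv, sub_nonpos, div_le_iff₀ (hD y)]
        nlinarith [mul_nonneg (pow_nonneg (neg_nonneg.mpr hy.2.le) 3)
          (by linarith [hy.1] : (0:ℝ) ≤ 2 + y)]
    have := anti (Set.mem_Icc.mpr ⟨hx1, h.le⟩) (Set.mem_Icc.mpr ⟨by norm_num, le_refl 0⟩) h.le
    rw [g0] at this
    simpa [hgdef] using this

lemma sqrt2_facts : (1.414 : ℝ) < Real.sqrt 2 ∧ Real.sqrt 2 < 1.415 := by
  have h2 : Real.sqrt 2 ^ 2 = 2 := Real.sq_sqrt (by norm_num)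
  have hn : 0 ≤ Real.sqrt 2 := Real.sqrt_nonneg 2
  constructor <;> nlinarith

lemma phi_upper (u : ℝ) : phi u ≤ Real.log (1 + u + u ^ 2 / 2) := by
  obtain ⟨hs1, hs2⟩ := sqrt2_facts
  unfold phi
  split_ifs with h1 h2
  · -- u < -√2
    have hhalf : (1:ℝ)/2 ≤ 1 + u + u ^ 2 / 2 := by nlinarith [sq_nonneg (u + 1)]
    have hlog : Real.log (1/2) ≤ Real.log (1 + u + u ^ 2 / 2) :=
      Real.log_le_log (by norm_num) hhalf
    have h2' : Real.log (1/2) = -Real.log 2 := by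
      rw [Real.log_div one_ne_zero two_ne_zero, Real.log_one]; ring
    have := Real.log_two_lt_d9
    nlinarith [hlog, this]
  · -- -√2 ≤ u ≤ √2
    exact key u (by linarith) (by linarith)
  · -- u > √2
    push_neg at h1 h2
    have hkey := key (Real.sqrt 2) (by linarith) (by linarith)
    have hcube : Real.sqrt 2 - Real.sqrt 2 ^ 3 / 6 = 2 * Real.sqrt 2 / 3 := by
      have h2 : Real.sqrt 2 ^ 2 = 2 := Real.sq_sqrt (by norm_num)
      nlinarith [h2]
    rw [hcube] at hkey
    have hmono : 1 + Real.sqrt 2 + Real.sqrt 2 ^ 2 / 2 ≤ 1 + u + u ^ 2 / 2 := by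
      nlinarith
    calc 2 * Real.sqrt 2 / 3 ≤ Real.log (1 + Real.sqrt 2 + Real.sqrt 2 ^ 2 / 2) := hkey
      _ ≤ Real.log (1 + u + u ^ 2 / 2) := Real.log_le_log (by positivity) hmono

lemma phi_neg (u : ℝ) : phi (-u) = -phi u := by
  obtain ⟨hs1, hs2⟩ := sqrt2_facts
  unfold phi
  split_ifs <;> first | ring1 | (exfalso; (try push_neg at *); linarith)

theorem catoni_phi_log_bounds (u : ℝ) :
    -Real.log (1 - u + u ^ 2 / 2) ≤ phi u ∧ phi u ≤ Real.log (1 + u + u ^ 2 / 2) := by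
  constructor
  · have h := phi_upper (-u)
    rw [phi_neg] at h
    have heq : 1 + -u + (-u) ^ 2 / 2 = 1 - u + u ^ 2 / 2 := by ring
    rw [heq] at h
    linarith
  · exact phi_upper u
end

section
/- (Sensitivity of truncated linear-regression gradient step) Let data points (x̃ᵢ, ỹᵢ) ∈ ℝ^d × ℝ satisfy ‖x̃ᵢ‖_∞ ≤ K and |ỹᵢ| ≤ K, and let w ∈ ℝ^d be s-sparse with ‖w‖₂ ≤ 1. Then the map D ↦ w − (η₀/m)·Σ_{i=1}^m x̃ᵢ(⟨x̃ᵢ, w⟩ − ỹᵢ) has ℓ_∞-sensitivity at most (2K²η₀/m)·(√s + 1) with respect to changing one of the m samples. -/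
private lemma l1_le_sqrt_sparse {d : ℕ} (w : Fin d → ℝ) (s : ℕ)
    (hsparse : Set.ncard {j | w j ≠ 0} ≤ s)
    (hw : Real.sqrt (∑ j, w j ^ 2) ≤ 1) :
    ∑ j, |w j| ≤ Real.sqrt s := by
  classical
  set T := Finset.univ.filter (fun j => w j ≠ 0) with hT
  have hcard : (T.card : ℝ) ≤ (s : ℝ) := by
    have : {j | w j ≠ 0}.ncard = T.card := by
      rw [Set.ncard_eq_toFinset_card']
      congr 1
      ext j; simp [hT]
    exact_mod_cast this ▸ hsparse
  have h1 : ∑ j, |w j| = ∑ j ∈ T, |w j| := by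
    rw [← Finset.sum_filter_ne_zero]
    congr 1
    ext j; simp [hT, abs_ne_zero]
  have h2 : ∑ j ∈ T, |w j| = ∑ j ∈ T, 1 * |w j| := by simp
  have hCS := Real.sum_mul_le_sqrt_mul_sqrt T (fun _ => (1:ℝ)) (fun j => |w j|)
  rw [h1, h2]
  calc ∑ j ∈ T, 1 * |w j|
      ≤ Real.sqrt (∑ j ∈ T, (1:ℝ)^2) * Real.sqrt (∑ j ∈ T, |w j|^2) := hCS
    _ ≤ Real.sqrt s * 1 := by
        apply mul_le_mul
        · apply Real.sqrt_le_sqrt; simpa using hcard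
        · refine le_trans ?_ hw
          apply Real.sqrt_le_sqrt
          calc ∑ j ∈ T, |w j| ^ 2 = ∑ j ∈ T, w j ^ 2 := by
                apply Finset.sum_congr rfl; intro j _; rw [sq_abs]
            _ ≤ ∑ j, w j ^ 2 := by
                apply Finset.sum_le_sum_of_subset_of_nonneg (Finset.subset_univ _)
                intro j _ _; positivity
        · positivity
        · positivity
    _ = Real.sqrt s := mul_one _

/-- ℓ∞-sensitivity of the truncated linear-regression gradient step with respect
to changing one of the `m` samples (the norm on `Fin d → ℝ` is the sup norm). -/
theorem truncated_gradient_step_sensitivity {d m : ℕ} (hm : 0 < m) (K η₀ : ℝ) (s : ℕ)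
    (hK : 0 < K) (hη : 0 < η₀)
    (w : Fin d → ℝ) (hsparse : Set.ncard {j | w j ≠ 0} ≤ s)
    (hw : Real.sqrt (∑ j, w j ^ 2) ≤ 1)
    (X X' : Fin m → Fin d → ℝ) (Y Y' : Fin m → ℝ)
    (hX : ∀ i j, |X i j| ≤ K) (hX' : ∀ i j, |X' i j| ≤ K)
    (hY : ∀ i, |Y i| ≤ K) (hY' : ∀ i, |Y' i| ≤ K)
    (i₀ : Fin m) (hneighbor : ∀ i, i ≠ i₀ → X i = X' i ∧ Y i = Y' i) :
    ‖(fun j => (w j - η₀ / m * ∑ i, X i j * ((∑ k, X i k * w k) - Y i)) -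
        (w j - η₀ / m * ∑ i, X' i j * ((∑ k, X' i k * w k) - Y' i)))‖ ≤
      2 * K ^ 2 * η₀ / m * (Real.sqrt s + 1) := by
  classical
  have hmR : (0:ℝ) < m := by exact_mod_cast hm
  have hl1 : ∑ j, |w j| ≤ Real.sqrt s := l1_le_sqrt_sparse w s hsparse hw
  -- bound on inner products
  have hinner : ∀ (Z : Fin m → Fin d → ℝ), (∀ i j, |Z i j| ≤ K) → ∀ i,
      |∑ k, Z i k * w k| ≤ K * Real.sqrt s := by
    intro Z hZ i
    calc |∑ k, Z i k * w k| ≤ ∑ k, |Z i k * w k| := Finset.abs_sum_le_sum_abs _ _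
      _ ≤ ∑ k, K * |w k| := by
          apply Finset.sum_le_sum
          intro k _
          rw [abs_mul]
          exact mul_le_mul_of_nonneg_right (hZ i k) (abs_nonneg _)
      _ = K * ∑ k, |w k| := by rw [Finset.mul_sum]
      _ ≤ K * Real.sqrt s := mul_le_mul_of_nonneg_left hl1 hK.le
  have hterm : ∀ (Z : Fin m → Fin d → ℝ) (V : Fin m → ℝ), (∀ i j, |Z i j| ≤ K) →
      (∀ i, |V i| ≤ K) → ∀ i j,
      |Z i j * ((∑ k, Z i k * w k) - V i)| ≤ K^2 * (Real.sqrt s + 1) := by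
    intro Z V hZ hV i j
    rw [abs_mul]
    have h1 : |(∑ k, Z i k * w k) - V i| ≤ K * Real.sqrt s + K :=
      (abs_sub _ _).trans (add_le_add (hinner Z hZ i) (hV i))
    calc |Z i j| * |(∑ k, Z i k * w k) - V i| ≤ K * (K * Real.sqrt s + K) := by
          apply mul_le_mul (hZ i j) h1 (abs_nonneg _) hK.le
      _ = K^2 * (Real.sqrt s + 1) := by ring
  have hsnn : (0:ℝ) ≤ Real.sqrt s := Real.sqrt_nonneg _
  have hrhs : (0:ℝ) ≤ 2 * K ^ 2 * η₀ / m * (Real.sqrt s + 1) := by positivity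
  rw [pi_norm_le_iff_of_nonneg hrhs]
  intro j
  have hsum : (∑ i, X i j * ((∑ k, X i k * w k) - Y i)) -
      (∑ i, X' i j * ((∑ k, X' i k * w k) - Y' i)) =
      X i₀ j * ((∑ k, X i₀ k * w k) - Y i₀) -
      X' i₀ j * ((∑ k, X' i₀ k * w k) - Y' i₀) := by
    rw [← Finset.sum_sub_distrib]
    rw [Finset.sum_eq_single i₀]
    · intro i _ hi
      obtain ⟨h1, h2⟩ := hneighbor i hi
      rw [h1, h2, sub_self]
    · simp
  have key : (w j - η₀ / m * ∑ i, X i j * ((∑ k, X i k * w k) - Y i)) -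
        (w j - η₀ / m * ∑ i, X' i j * ((∑ k, X' i k * w k) - Y' i)) =
      η₀ / m * ((∑ i, X' i j * ((∑ k, X' i k * w k) - Y' i)) -
        (∑ i, X i j * ((∑ k, X i k * w k) - Y i))) := by ring
  show |_| ≤ _
  rw [key, abs_mul, abs_of_pos (by positivity : (0:ℝ) < η₀ / m)]
  have : |(∑ i, X' i j * ((∑ k, X' i k * w k) - Y' i)) -
      (∑ i, X i j * ((∑ k, X i k * w k) - Y i))| ≤ 2 * (K^2 * (Real.sqrt s + 1)) := by
    rw [abs_sub_comm, hsum]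
    calc |X i₀ j * ((∑ k, X i₀ k * w k) - Y i₀) -
        X' i₀ j * ((∑ k, X' i₀ k * w k) - Y' i₀)|
        ≤ |X i₀ j * ((∑ k, X i₀ k * w k) - Y i₀)| +
          |X' i₀ j * ((∑ k, X' i₀ k * w k) - Y' i₀)| := abs_sub _ _
      _ ≤ K^2 * (Real.sqrt s + 1) + K^2 * (Real.sqrt s + 1) :=
          add_le_add (hterm X Y hX hY i₀ j) (hterm X' Y' hX' hY' i₀ j)
      _ = 2 * (K^2 * (Real.sqrt s + 1)) := by ring
  calc η₀ / m * |(∑ i, X' i j * ((∑ k, X' i k * w k) - Y' i)) -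
      (∑ i, X i j * ((∑ k, X i k * w k) - Y i))|
      ≤ η₀ / m * (2 * (K^2 * (Real.sqrt s + 1))) :=
        mul_le_mul_of_nonneg_left this (by positivity)
    _ = 2 * K ^ 2 * η₀ / m * (Real.sqrt s + 1) := by ring
end

section
/- (Sparse packing via Gilbert–Varshamov) For any s ∈ [d] with s ≤ d (and s even, d − s ≥ s/2), consider H(s) = {z ∈ {−1,0,+1}^d : ‖z‖₀ = s} with Hamming distance ρ_H(z,z') = Σⱼ 1[zⱼ ≠ z'ⱼ]. There exists a subset H̃ ⊆ H(s) with |H̃| ≥ exp((s/2)·log((d−s)/(s/2))) such that ρ_H(z, z') ≥ s/2 for all distinct z, z' ∈ H̃. -/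
open Finset Nat

lemma prod_lb (m : ℕ) : ∀ k : ℕ,
    m^k * (8*m^2 + 4*(k+2)*(k+3)*m + (k+2)^3*k) ≤ 8 * ∏ i ∈ range (k+2), (m+1+i) := by
  intro k
  induction k with
  | zero => simp [Finset.prod_range_succ]; nlinarith [Nat.zero_le m]
  | succ k ih =>
      have h1 : (8*m^2 + 4*(k+2)*(k+3)*m + (k+2)^3*k) * (m+1+(k+2))
          = m * (8*m^2 + 4*(k+3)*(k+4)*m + (k+3)^3*(k+1))
            + ((8*(k+2)^2+6*(k+2)+1)*m + (k+2)^3*k*(k+3)) := by ring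
      have h2 : m * (8*m^2 + 4*(k+3)*(k+4)*m + (k+3)^3*(k+1))
          ≤ (8*m^2 + 4*(k+2)*(k+3)*m + (k+2)^3*k) * (m+1+(k+2)) := by omega
      have e : k+1+2 = (k+2)+1 := rfl
      rw [e, Finset.prod_range_succ]
      calc m^(k+1) * (8*m^2 + 4*(k+3)*(k+4)*m + (k+3)^3*(k+1))
          = m^k * (m * (8*m^2 + 4*(k+3)*(k+4)*m + (k+3)^3*(k+1))) := by ring
        _ ≤ m^k * ((8*m^2 + 4*(k+2)*(k+3)*m + (k+2)^3*k) * (m+1+(k+2))) :=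
            Nat.mul_le_mul_left _ h2
        _ = (m^k * (8*m^2 + 4*(k+2)*(k+3)*m + (k+2)^3*k)) * (m+1+(k+2)) := by ring
        _ ≤ (8 * ∏ i ∈ range (k+2), (m+1+i)) * (m+1+(k+2)) := Nat.mul_le_mul_right _ ih
        _ = 8 * ((∏ i ∈ range (k+2), (m+1+i)) * (m+1+(k+2))) := by ring

lemma keyQuad (u m : ℕ) (hm : u + 1 ≤ m) :
    8*(u+1)^2*m ≤ 8*m^2 + 4*(u+2)*(u+3)*m + (u+2)^3*u := by
  rcases Nat.eq_zero_or_pos u with rfl | hu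
  · nlinarith
  · zify
    nlinarith [sq_nonneg (4*(m:ℤ) - (u^2 - u - 4)), sq_nonneg ((m:ℤ) - u),
      sq_nonneg ((u:ℤ) - 1), sq_nonneg ((u:ℤ)+1)]

lemma fact_le_aux (a n : ℕ) : ∀ b : ℕ, a + b ≤ n → (a + b)! ≤ n^b * a ! := by
  intro b
  induction b with
  | zero => simp
  | succ b ih =>
      intro h
      have h1 : a + b ≤ n := by omega
      have e : a + (b+1) = (a + b) + 1 := rfl
      rw [e, Nat.factorial_succ]
      calc (a+b+1) * (a+b)! ≤ n * (n^b * a !) := Nat.mul_le_mul (by omega) (ih h1)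
        _ = n^(b+1) * a ! := by ring

lemma asc_prod (m : ℕ) : ∀ k : ℕ, m ! * ∏ i ∈ range k, (m+1+i) = (m + k)! := by
  intro k
  induction k with
  | zero => simp
  | succ k ih =>
      rw [Finset.prod_range_succ, ← Nat.mul_assoc, ih]
      have : m + (k+1) = (m + k) + 1 := rfl
      rw [this, Nat.factorial_succ]; ring

lemma choose_mono_half (d : ℕ) : ∀ k j : ℕ, j ≤ k → k ≤ d/2 → d.choose j ≤ d.choose k := by
  intro k
  induction k with
  | zero => intro j hj _; interval_cases j; exact le_rfl
  | succ k ih =>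
      intro j hj hk
      rcases Nat.eq_or_lt_of_le hj with rfl | hlt
      · exact le_rfl
      · exact (ih j (by omega) (by omega)).trans
          (Nat.choose_le_succ_of_lt_half_left (by omega))

lemma main_arith (t m : ℕ) (ht : 1 ≤ t) (htm : t ≤ m) :
    m^t * (2^(t-1) * (t * (m+2*t).choose (t-1))) ≤ t^t * ((m+2*t).choose (2*t) * 2^(2*t)) := by
  obtain ⟨u, rfl⟩ : ∃ u, t = u + 1 := ⟨t-1, by omega⟩
  set t := u + 1 with htdef
  set d := m + 2*t with hd
  set P := ∏ i ∈ range (t+1), (m+1+i) with hP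
  -- identity
  have id1 : d.choose (t-1) * (t-1)! * P = d.choose (2*t) * (2*t)! := by
    have h1 : d.choose u * u ! * (d - u)! = d ! :=
      Nat.choose_mul_factorial_mul_factorial (by omega)
    have h2 : d.choose (2*t) * (2*t)! * (d - 2*t)! = d ! :=
      Nat.choose_mul_factorial_mul_factorial (by omega)
    have e1 : d - u = m + (t+1) := by omega
    have e2 : d - 2*t = m := by omega
    rw [e1] at h1; rw [e2] at h2
    have h3 : m ! * P = (m + (t+1))! := asc_prod m (t+1)
    have e3 : t - 1 = u := by omega
    rw [e3]
    apply Nat.eq_of_mul_eq_mul_right (Nat.factorial_pos m)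
    calc d.choose u * u ! * P * m ! = d.choose u * u ! * (m ! * P) := by ring
      _ = d.choose u * u ! * (m + (t+1))! := by rw [h3]
      _ = d ! := h1
      _ = d.choose (2*t) * (2*t)! * m ! := h2.symm
  -- t^2 * m^t ≤ P
  have hG : t^2 * m^t ≤ P := by
    have h1 := prod_lb m u
    have h2 := keyQuad u m (by omega)
    have h3 : 8 * (t^2 * m^t) ≤ 8 * P := by
      calc 8 * (t^2 * m^t) = m^u * (8*(u+1)^2*m) := by rw [htdef]; ring
        _ ≤ m^u * (8*m^2 + 4*(u+2)*(u+3)*m + (u+2)^3*u) := Nat.mul_le_mul_left _ h2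
        _ ≤ 8 * ∏ i ∈ range (u+2), (m+1+i) := h1
        _ = 8 * P := by rw [hP]
    omega
  have hFact : (2*t)! ≤ (2*t)^(t+1) * (t-1)! := by
    have e : u + (t+1) = 2*t := by omega
    have := fact_le_aux u (2*t) (t+1) (by omega)
    rw [e] at this
    have e2 : t - 1 = u := by omega
    rw [e2]; exact this
  -- final chain, multiplied by (2t)!
  apply Nat.le_of_mul_le_mul_right _ (Nat.factorial_pos (2*t))
  have e2 : t - 1 = u := by omega
  calc m^t * (2^(t-1) * (t * d.choose (t-1))) * (2*t)!
      = (m^t * 2^u * t * d.choose u) * (2*t)! := by rw [e2]; ring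
    _ ≤ (m^t * 2^u * t * d.choose u) * ((2*t)^(t+1) * (t-1)!) :=
        Nat.mul_le_mul_left _ hFact
    _ = (d.choose u * u !) * ((m^t * (2^u * 2^(t+1))) * (t * t^(t+1))) := by
        rw [e2, mul_pow 2 t (t+1)]; ring
    _ = (d.choose u * u !) * ((m^t * 2^(2*t)) * (t^2 * t^t)) := by
        rw [show (2:ℕ)^u * 2^(t+1) = 2^(2*t) by rw [← pow_add]; congr 1; omega,
            show t * t^(t+1) = t^2 * t^t by rw [← _root_.pow_succ', ← pow_add]; congr 1; omega]
    _ = d.choose u * u ! * (t^t * 2^(2*t) * (t^2 * m^t)) := by ring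
    _ ≤ d.choose u * u ! * (t^t * 2^(2*t) * P) := by
        apply Nat.mul_le_mul_left
        exact Nat.mul_le_mul_left _ hG
    _ = t^t * 2^(2*t) * (d.choose (t-1) * (t-1)! * P) := by rw [e2]; ring
    _ = t^t * 2^(2*t) * (d.choose (2*t) * (2*t)!) := by rw [id1]
    _ = t^t * (d.choose (2*t) * 2^(2*t)) * (2*t)! := by ring

def alt3 : Fin 3 → Fin 2 → Fin 3 := fun a k =>
  if a = 0 then (if k = 0 then 1 else 2)
  else if a = 1 then (if k = 0 then 0 else 2)
  else (if k = 0 then 0 else 1)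

def idx3 : Fin 3 → Fin 3 → Fin 2 := fun a b => if b = alt3 a 0 then 0 else 1

lemma alt3_idx3 : ∀ a b : Fin 3, b ≠ a → alt3 a (idx3 a b) = b := by decide

/-- ball bound : number of x within Hamming distance < t of a fixed z -/
lemma ball_bound (d t : ℕ) (ht : 1 ≤ t) (hdt : t - 1 ≤ d / 2) (z : Fin d → Fin 3) :
    (univ.filter fun x : Fin d → Fin 3 =>
      (univ.filter fun j => x j ≠ z j).card < t).card ≤ 2^(t-1) * (t * d.choose (t-1)) := by
  classical
  set ball := univ.filter fun x : Fin d → Fin 3 =>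
      (univ.filter fun j => x j ≠ z j).card < t with hball
  set f : (Fin d → Fin 3) → Finset (Fin d) := fun x => univ.filter fun j => x j ≠ z j with hf
  have hcard : ∀ x ∈ ball, (f x).card < t := by
    intro x hx
    simp only [hball, mem_filter, mem_univ, true_and] at hx
    exact hx
  have step1 : ball.card ≤ 2^(t-1) * (ball.image f).card := by
    apply Finset.card_le_mul_card_image
    intro D hD
    obtain ⟨x0, hx0, hfx0⟩ := Finset.mem_image.mp hD
    have hDcard : D.card ≤ t - 1 := by
      have := hcard x0 hx0; rw [hfx0] at this; omega
    -- injection into D.pi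
    have hinj : (ball.filter fun x => f x = D).card ≤ (D.pi fun _ => (univ : Finset (Fin 2))).card := by
      apply Finset.card_le_card_of_injOn (fun x => fun j (hj : j ∈ D) => idx3 (z j) (x j))
      · intro x _; exact Finset.mem_pi.mpr fun a ha => Finset.mem_univ _
      · intro x hx y hy hxy
        rw [Finset.mem_coe, Finset.mem_filter] at hx hy
        funext j
        by_cases hj : j ∈ D
        · have hjx : j ∈ f x := hx.2.symm ▸ hj
          have hjy : j ∈ f y := hy.2.symm ▸ hj
          have hxj : x j ≠ z j := by simpa [hf] using (Finset.mem_filter.mp hjx).2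
          have hyj : y j ≠ z j := by simpa [hf] using (Finset.mem_filter.mp hjy).2
          have hii : idx3 (z j) (x j) = idx3 (z j) (y j) := congrFun (congrFun hxy j) hj
          calc x j = alt3 (z j) (idx3 (z j) (x j)) := (alt3_idx3 _ _ hxj).symm
            _ = alt3 (z j) (idx3 (z j) (y j)) := by rw [hii]
            _ = y j := alt3_idx3 _ _ hyj
        · have hxj : x j = z j := by
            by_contra hne
            exact hj (hx.2 ▸ (by simp [hf, hne] : j ∈ f x))
          have hyj : y j = z j := by
            by_contra hne
            exact hj (hy.2 ▸ (by simp [hf, hne] : j ∈ f y))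
          rw [hxj, hyj]
    calc (ball.filter fun x => f x = D).card
        ≤ (D.pi fun _ => (univ : Finset (Fin 2))).card := hinj
      _ = 2 ^ D.card := by rw [Finset.card_pi]; simp
      _ ≤ 2 ^ (t-1) := Nat.pow_le_pow_right (by norm_num) hDcard
  have step2 : (ball.image f).card ≤ t * d.choose (t-1) := by
    have hsub : ball.image f ⊆ (range t).biUnion (fun j => powersetCard j univ) := by
      intro D hD
      obtain ⟨x0, hx0, hfx0⟩ := Finset.mem_image.mp hD
      have := hcard x0 hx0
      rw [hfx0] at this
      apply Finset.mem_biUnion.mpr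
      exact ⟨D.card, Finset.mem_range.mpr this, Finset.mem_powersetCard.mpr ⟨subset_univ _, rfl⟩⟩
    calc (ball.image f).card ≤ ((range t).biUnion (fun j => powersetCard j univ)).card :=
          Finset.card_le_card hsub
      _ ≤ ∑ j ∈ range t, (powersetCard j (univ : Finset (Fin d))).card := Finset.card_biUnion_le
      _ = ∑ j ∈ range t, d.choose j := by
          apply Finset.sum_congr rfl; intro j _
          rw [Finset.card_powersetCard, Finset.card_univ, Fintype.card_fin]
      _ ≤ ∑ _j ∈ range t, d.choose (t-1) := by
          apply Finset.sum_le_sum; intro j hj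
          have hj' := Finset.mem_range.mp hj
          exact choose_mono_half d (t-1) j (by omega) hdt
      _ = t * d.choose (t-1) := by rw [Finset.sum_const, Finset.card_range]; ring
  calc ball.card ≤ 2^(t-1) * (ball.image f).card := step1
    _ ≤ 2^(t-1) * (t * d.choose (t-1)) := Nat.mul_le_mul_left _ step2

def emb2 : Fin 2 → Fin 3 := fun k => if k = 0 then 0 else 2

lemma emb2_ne_one : ∀ k, emb2 k ≠ 1 := by decide
lemma emb2_inj : ∀ k k', emb2 k = emb2 k' → k = k' := by decide

variable {d : ℕ}

noncomputable def spaceF (x : Σ D : Finset (Fin d), (∀ a ∈ D, Fin 2)) : Fin d → Fin 3 :=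
  fun j => if h : j ∈ x.1 then emb2 (x.2 j h) else 1

noncomputable def space (d s : ℕ) : Finset (Fin d → Fin 3) :=
  ((powersetCard s (univ : Finset (Fin d))).sigma
    (fun D => D.pi fun _ => (univ : Finset (Fin 2)))).image spaceF

lemma spaceF_supp (x : Σ D : Finset (Fin d), (∀ a ∈ D, Fin 2)) :
    (univ.filter fun j => spaceF x j ≠ 1) = x.1 := by
  ext j
  simp only [mem_filter, mem_univ, true_and, spaceF]
  by_cases h : j ∈ x.1
  · simp [h, emb2_ne_one]
  · simp [h]

lemma space_card (s : ℕ) : (space d s).card = d.choose s * 2^s := by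
  classical
  rw [space, Finset.card_image_of_injOn]
  · rw [Finset.card_sigma]
    have h1 : ∀ D ∈ powersetCard s (univ : Finset (Fin d)),
        (D.pi fun _ => (univ : Finset (Fin 2))).card = 2^s := by
      intro D hD
      have hDc : D.card = s := (Finset.mem_powersetCard.mp hD).2
      rw [Finset.card_pi]
      simp [hDc]
    rw [Finset.sum_congr rfl h1, Finset.sum_const, Finset.card_powersetCard,
      Finset.card_univ, Fintype.card_fin, smul_eq_mul]
  · intro x hx y hy hxy
    have hD : x.1 = y.1 := by
      rw [← spaceF_supp x, ← spaceF_supp y, hxy]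
    obtain ⟨Dx, px⟩ := x
    obtain ⟨Dy, py⟩ := y
    cases hD
    congr 1
    funext j hj
    have := congrFun hxy j
    simp only [spaceF, dif_pos hj] at this
    exact emb2_inj _ _ this

lemma space_mem (s : ℕ) (z : Fin d → Fin 3) (hz : z ∈ space d s) :
    (univ.filter fun j => z j ≠ 1).card = s := by
  classical
  obtain ⟨x, hx, rfl⟩ := Finset.mem_image.mp hz
  rw [spaceF_supp]
  exact (Finset.mem_powersetCard.mp (Finset.mem_sigma.mp hx).1).2

lemma packing (d t : ℕ) (ht : 1 ≤ t) (X : Finset (Fin d → Fin 3)) (B : ℕ)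
    (hB : ∀ z : Fin d → Fin 3,
      (univ.filter fun x : Fin d → Fin 3 =>
        (univ.filter fun j => x j ≠ z j).card < t).card ≤ B) :
    ∃ H : Finset (Fin d → Fin 3), H ⊆ X ∧
      (∀ z ∈ H, ∀ z' ∈ H, z ≠ z' → t ≤ (univ.filter fun j => z j ≠ z' j).card) ∧
      X.card ≤ B * H.card := by
  classical
  set P : Finset (Fin d → Fin 3) → Prop := fun H =>
    ∀ z ∈ H, ∀ z' ∈ H, z ≠ z' → t ≤ (univ.filter fun j => z j ≠ z' j).card with hP
  set 𝒜 := X.powerset.filter P with h𝒜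
  have hne : 𝒜.Nonempty := ⟨∅, by simp [h𝒜, hP]⟩
  obtain ⟨H, hH𝒜, hmax⟩ := Finset.exists_max_image 𝒜 Finset.card hne
  have hHsub : H ⊆ X := Finset.mem_powerset.mp (Finset.mem_filter.mp hH𝒜).1
  have hHpair : P H := (Finset.mem_filter.mp hH𝒜).2
  have hcover : ∀ x ∈ X, ∃ z, z ∈ H ∧ (univ.filter fun j => x j ≠ z j).card < t := by
    intro x hxX
    by_contra hnot
    push_neg at hnot
    have hxH : x ∉ H := by
      intro hxH
      have := hnot x hxH
      simp at this
      omega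
    have hins : insert x H ∈ 𝒜 := by
      rw [h𝒜, Finset.mem_filter, Finset.mem_powerset]
      constructor
      · exact Finset.insert_subset hxX hHsub
      · intro z hz z' hz' hne'
        rcases Finset.mem_insert.mp hz with rfl | hzH
        · rcases Finset.mem_insert.mp hz' with rfl | hz'H
          · exact absurd rfl hne'
          · have h1 := hnot z' hz'H
            omega
        · rcases Finset.mem_insert.mp hz' with rfl | hz'H
          · have h1 := hnot z hzH
            have heq : (univ.filter fun j => z j ≠ z' j) = (univ.filter fun j => z' j ≠ z j) := by
              apply Finset.filter_congr; intro j _; simp [ne_comm]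
            rw [heq]
            omega
          · exact hHpair z hzH z' hz'H hne'
    have := hmax _ hins
    rw [Finset.card_insert_of_notMem hxH] at this
    omega
  set g : (Fin d → Fin 3) → (Fin d → Fin 3) := fun x =>
    if hx : ∃ z, z ∈ H ∧ (univ.filter fun j => x j ≠ z j).card < t
    then hx.choose else (fun _ => 1) with hg
  refine ⟨H, hHsub, hHpair, ?_⟩
  apply Finset.card_le_mul_card_image_of_maps_to (f := g) (t := H) ?_ B ?_
  · intro x hxX
    have hx := hcover x hxX
    have hgeq : g x = hx.choose := by rw [hg]; exact dif_pos hx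
    rw [hgeq]
    exact hx.choose_spec.1
  · intro z _
    have hsub : (X.filter fun x => g x = z) ⊆
        univ.filter fun x : Fin d → Fin 3 =>
          (univ.filter fun j => x j ≠ z j).card < t := by
      intro x hx
      rw [Finset.mem_filter] at hx
      obtain ⟨hxX, hgx⟩ := hx
      have hex := hcover x hxX
      have hgeq : g x = hex.choose := by rw [hg]; exact dif_pos hex
      rw [Finset.mem_filter]
      refine ⟨Finset.mem_univ _, ?_⟩
      rw [← hgx, hgeq]
      exact hex.choose_spec.2
    exact (Finset.card_le_card hsub).trans (hB z)

/-- Gilbert–Varshamov type sparse packing: there is a family of `s`-sparse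
sign vectors of cardinality at least `exp((s/2) log((d−s)/(s/2)))` with pairwise
Hamming distance at least `s/2`. -/
theorem sparse_packing (d s : ℕ) (hs : 0 < s) (hsd : s ≤ d) (heven : Even s)
    (hgap : (s : ℝ) / 2 ≤ (d : ℝ) - s) :
    ∃ H : Finset (Fin d → ℝ),
      (∀ z ∈ H, (∀ j, z j = -1 ∨ z j = 0 ∨ z j = 1) ∧ Set.ncard {j | z j ≠ 0} = s) ∧
      Real.exp ((s : ℝ) / 2 * Real.log (((d : ℝ) - s) / ((s : ℝ) / 2))) ≤ (H.card : ℝ) ∧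
      ∀ z ∈ H, ∀ z' ∈ H, z ≠ z' →
        (s : ℝ) / 2 ≤ (Set.ncard {j | z j ≠ z' j} : ℝ) := by
  classical
  obtain ⟨t, ht2⟩ := heven
  have ht1 : 1 ≤ t := by omega
  set m := d - s with hm
  have hds : d = m + 2*t := by omega
  have hsr : (s : ℝ) / 2 = (t : ℝ) := by rw [ht2]; push_cast; ring
  have hdsr : (d : ℝ) - s = (m : ℝ) := by
    have : (d : ℝ) = (m : ℝ) + (s : ℝ) := by rw [hds, ht2]; push_cast; ring
    rw [this]; ring
  have htm : t ≤ m := by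
    have : (t : ℝ) ≤ (m : ℝ) := by rw [← hsr, ← hdsr]; exact hgap
    exact_mod_cast this
  -- ball bound
  set B := 2^(t-1) * (t * d.choose (t-1)) with hBdef
  have hB : ∀ z : Fin d → Fin 3,
      (univ.filter fun x : Fin d → Fin 3 =>
        (univ.filter fun j => x j ≠ z j).card < t).card ≤ B :=
    ball_bound d t ht1 (by omega)
  -- packing within the weight-s space
  obtain ⟨H, hHsub, hHpair, hHcount⟩ := packing d t ht1 (space d s) B hB
  have hXcard : (space d s).card = d.choose s * 2^s := space_card s
  -- counting:  m^t ≤ t^t * H.card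
  have hArith := main_arith t m ht1 htm
  rw [← hds] at hArith
  have hst : s = 2*t := by omega
  have hmain : m^t ≤ t^t * H.card := by
    have hBpos : 0 < B := by
      rw [hBdef]
      have : 0 < d.choose (t-1) := Nat.choose_pos (by omega)
      positivity
    have h1 : m^t * B ≤ (t^t * H.card) * B := by
      calc m^t * B = m^t * (2^(t-1) * (t * d.choose (t-1))) := by rw [hBdef]
        _ ≤ t^t * (d.choose (2*t) * 2^(2*t)) := hArith
        _ = t^t * (d.choose s * 2^s) := by rw [hst]
        _ = t^t * (space d s).card := by rw [hXcard]
        _ ≤ t^t * (B * H.card) := Nat.mul_le_mul_left _ hHcount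
        _ = (t^t * H.card) * B := by ring
    exact Nat.le_of_mul_le_mul_right h1 hBpos
  -- map to real vectors
  set χ : Fin 3 → ℝ := fun k => (k.val : ℝ) - 1 with hχ
  have hχinj : Function.Injective χ := by
    intro a b hab
    have hab' : (a.val : ℝ) - 1 = (b.val : ℝ) - 1 := hab
    have hv : (a.val : ℝ) = (b.val : ℝ) := by linarith
    have : a.val = b.val := by exact_mod_cast hv
    exact Fin.ext this
  set F : (Fin d → Fin 3) → (Fin d → ℝ) := fun c => fun j => χ (c j) with hF
  have hFinj : Function.Injective F := fun c c' h => funext fun j => hχinj (congrFun h j)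
  refine ⟨H.image F, ?_, ?_, ?_⟩
  · -- membership properties
    intro z hz
    obtain ⟨c, hcH, rfl⟩ := Finset.mem_image.mp hz
    have hcX := hHsub hcH
    constructor
    · intro j
      have h3 : (c j).val = 0 ∨ (c j).val = 1 ∨ (c j).val = 2 := by omega
      rcases h3 with h | h | h <;> [left; (right; left); (right; right)] <;>
        norm_num [hF, hχ, h]
    · have hset : {j | F c j ≠ 0} = ↑(univ.filter fun j => c j ≠ 1) := by
        ext j
        simp only [hF, hχ, Set.mem_setOf_eq, Finset.coe_filter, Finset.mem_univ, true_and,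
          Set.mem_setOf_eq]
        constructor
        · intro hne
          intro h1
          rw [h1] at hne
          norm_num at hne
        · intro hne h0
          apply hne
          have : ((c j).val : ℝ) = 1 := by linarith
          have : (c j).val = 1 := by exact_mod_cast this
          exact Fin.ext (by omega)
      rw [hset, Set.ncard_coe_finset]
      exact space_mem s c hcX
  · -- cardinality bound
    rw [Finset.card_image_of_injective _ hFinj]
    rw [hsr, hdsr]
    have hmpos : (0:ℝ) < (m : ℝ) / (t : ℝ) := by
      apply _root_.div_pos <;> [exact_mod_cast (by omega : 0 < m); exact_mod_cast ht1]
    rw [show (t:ℝ) * Real.log ((m:ℝ)/(t:ℝ)) = Real.log (((m:ℝ)/(t:ℝ))^t) by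
      rw [Real.log_pow]]
    rw [Real.exp_log (pow_pos hmpos t)]
    rw [div_pow, div_le_iff₀ (by positivity)]
    have : (m:ℝ)^t ≤ (t:ℝ)^t * (H.card : ℝ) := by exact_mod_cast hmain
    linarith
  · -- distances
    intro z hz z' hz' hne
    obtain ⟨c, hcH, rfl⟩ := Finset.mem_image.mp hz
    obtain ⟨c', hc'H, rfl⟩ := Finset.mem_image.mp hz'
    have hcc' : c ≠ c' := fun h => hne (by rw [h])
    have hdist := hHpair c hcH c' hc'H hcc'
    have hset : {j | F c j ≠ F c' j} = ↑(univ.filter fun j => c j ≠ c' j) := by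
      ext j
      simp only [hF, Set.mem_setOf_eq, Finset.coe_filter, Finset.mem_univ, true_and,
        Set.mem_setOf_eq]
      constructor
      · intro h hc; exact h (by rw [hc])
      · intro h hχeq; exact h (hχinj hχeq)
    rw [hset, Set.ncard_coe_finset, hsr]
    exact_mod_cast hdist
end
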